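/- Let U ⊆ ℝ² be open and f, r : U → ℝ be C² functions. Define H(g) = g_xx·g_y² − 2·g_xy·g_x·g_y + g_yy·g_x² for a C² function g. Then at every point (x,y) ∈ U with f(x,y) = 0 one has H(f·r)(x,y) = r(x,y)³ · H(f)(x,y). -/

import Mathlib

/-- Partial derivative in the first variable of a function of two real variables. -/
noncomputable def px (h : ℝ → ℝ → ℝ) : ℝ → ℝ → ℝ := fun x y => deriv (fun t => h t y) x

/-- Partial derivative in the second variable of a function of two real variables. -/
noncomputable def py (h : ℝ → ℝ → ℝ) : ℝ → ℝ → ℝ := fun x y => deriv (fun t => h x t) y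

/-- `H(g) = g_xx·g_y² − 2·g_xy·g_x·g_y + g_yy·g_x²`. -/
noncomputable def Hfun (g : ℝ → ℝ → ℝ) : ℝ → ℝ → ℝ := fun x y =>
  px (px g) x y * (py g x y) ^ 2 - 2 * py (px g) x y * px g x y * py g x y
    + py (py g) x y * (px g x y) ^ 2

private lemma px_eq {g : ℝ → ℝ → ℝ} {x y : ℝ}
    (h : DifferentiableAt ℝ (fun q : ℝ × ℝ => g q.1 q.2) (x, y)) :
    px g x y = fderiv ℝ (fun q : ℝ × ℝ => g q.1 q.2) (x, y) (1, 0) := by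
  have h1 : HasDerivAt (fun t : ℝ => ((t, y) : ℝ × ℝ)) ((1 : ℝ), (0 : ℝ)) x :=
    (hasDerivAt_id x).prodMk (hasDerivAt_const x y)
  have := h.hasFDerivAt.comp_hasDerivAt x h1
  exact this.deriv

private lemma py_eq {g : ℝ → ℝ → ℝ} {x y : ℝ}
    (h : DifferentiableAt ℝ (fun q : ℝ × ℝ => g q.1 q.2) (x, y)) :
    py g x y = fderiv ℝ (fun q : ℝ × ℝ => g q.1 q.2) (x, y) (0, 1) := by
  have h1 : HasDerivAt (fun t : ℝ => ((x, t) : ℝ × ℝ)) ((0 : ℝ), (1 : ℝ)) y :=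
    (hasDerivAt_const y x).prodMk (hasDerivAt_id y)
  have := h.hasFDerivAt.comp_hasDerivAt y h1
  exact this.deriv

private lemma dF {U : Set (ℝ × ℝ)} (hU : IsOpen U) {G : ℝ × ℝ → ℝ}
    (h : ContDiffOn ℝ 2 G U) {p : ℝ × ℝ} (hp : p ∈ U) :
    DifferentiableAt ℝ G p :=
  ((h.differentiableOn two_ne_zero).differentiableAt (hU.mem_nhds hp))

private lemma dfderiv {U : Set (ℝ × ℝ)} (hU : IsOpen U) {G : ℝ × ℝ → ℝ}
    (h : ContDiffOn ℝ 2 G U) {p : ℝ × ℝ} (hp : p ∈ U) (v : ℝ × ℝ) :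
    DifferentiableAt ℝ (fun q => fderiv ℝ G q v) p := by
  have h1 : ContDiffOn ℝ 1 (fderiv ℝ G) U := h.fderiv_of_isOpen hU (by norm_num)
  have h2 : DifferentiableAt ℝ (fderiv ℝ G) p :=
    (h1.differentiableOn one_ne_zero).differentiableAt (hU.mem_nhds hp)
  exact h2.clm_apply (differentiableAt_const v)

/-- differentiability of `t ↦ px g t y` at `x`. -/
private lemma diff_px1 {U : Set (ℝ × ℝ)} (hU : IsOpen U) {g : ℝ → ℝ → ℝ}
    (hg : ContDiffOn ℝ 2 (fun q : ℝ × ℝ => g q.1 q.2) U) {x y : ℝ} (hxy : (x, y) ∈ U) :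
    DifferentiableAt ℝ (fun t => px g t y) x := by
  set G : ℝ × ℝ → ℝ := fun q => g q.1 q.2 with hG
  have hev : (fun t => px g t y) =ᶠ[nhds x] (fun t => fderiv ℝ G (t, y) (1, 0)) := by
    have hop : IsOpen {t : ℝ | (t, y) ∈ U} := hU.preimage (by fun_prop)
    filter_upwards [hop.mem_nhds hxy] with t ht
    exact px_eq (dF hU hg ht)
  have hd : DifferentiableAt ℝ (fun t => fderiv ℝ G (t, y) (1, 0)) x :=
    (dfderiv hU hg hxy ((1 : ℝ), (0 : ℝ))).comp (f := fun t : ℝ => (t, y)) x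
      (differentiableAt_id.prodMk (differentiableAt_const y))
  exact (hev.differentiableAt_iff).mpr hd

/-- differentiability of `t ↦ px g x t` at `y`. -/
private lemma diff_px2 {U : Set (ℝ × ℝ)} (hU : IsOpen U) {g : ℝ → ℝ → ℝ}
    (hg : ContDiffOn ℝ 2 (fun q : ℝ × ℝ => g q.1 q.2) U) {x y : ℝ} (hxy : (x, y) ∈ U) :
    DifferentiableAt ℝ (fun t => px g x t) y := by
  set G : ℝ × ℝ → ℝ := fun q => g q.1 q.2 with hG
  have hev : (fun t => px g x t) =ᶠ[nhds y] (fun t => fderiv ℝ G (x, t) (1, 0)) := by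
    have hop : IsOpen {t : ℝ | (x, t) ∈ U} := hU.preimage (by fun_prop)
    filter_upwards [hop.mem_nhds hxy] with t ht
    exact px_eq (dF hU hg ht)
  have hd : DifferentiableAt ℝ (fun t => fderiv ℝ G (x, t) (1, 0)) y :=
    (dfderiv hU hg hxy ((1 : ℝ), (0 : ℝ))).comp y
      ((differentiableAt_const x).prodMk differentiableAt_id)
  exact (hev.differentiableAt_iff).mpr hd

/-- differentiability of `t ↦ py g x t` at `y`. -/
private lemma diff_py2 {U : Set (ℝ × ℝ)} (hU : IsOpen U) {g : ℝ → ℝ → ℝ}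
    (hg : ContDiffOn ℝ 2 (fun q : ℝ × ℝ => g q.1 q.2) U) {x y : ℝ} (hxy : (x, y) ∈ U) :
    DifferentiableAt ℝ (fun t => py g x t) y := by
  set G : ℝ × ℝ → ℝ := fun q => g q.1 q.2 with hG
  have hev : (fun t => py g x t) =ᶠ[nhds y] (fun t => fderiv ℝ G (x, t) (0, 1)) := by
    have hop : IsOpen {t : ℝ | (x, t) ∈ U} := hU.preimage (by fun_prop)
    filter_upwards [hop.mem_nhds hxy] with t ht
    exact py_eq (dF hU hg ht)
  have hd : DifferentiableAt ℝ (fun t => fderiv ℝ G (x, t) (0, 1)) y :=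
    (dfderiv hU hg hxy ((0 : ℝ), (1 : ℝ))).comp y
      ((differentiableAt_const x).prodMk differentiableAt_id)
  exact (hev.differentiableAt_iff).mpr hd

private lemma diff1 {U : Set (ℝ × ℝ)} (hU : IsOpen U) {g : ℝ → ℝ → ℝ}
    (hg : ContDiffOn ℝ 2 (fun q : ℝ × ℝ => g q.1 q.2) U) {x y : ℝ} (hxy : (x, y) ∈ U) :
    DifferentiableAt ℝ (fun t => g t y) x :=
  (dF hU hg hxy).comp (f := fun t : ℝ => (t, y)) x (differentiableAt_id.prodMk (differentiableAt_const y))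

private lemma diff2 {U : Set (ℝ × ℝ)} (hU : IsOpen U) {g : ℝ → ℝ → ℝ}
    (hg : ContDiffOn ℝ 2 (fun q : ℝ × ℝ => g q.1 q.2) U) {x y : ℝ} (hxy : (x, y) ∈ U) :
    DifferentiableAt ℝ (fun t => g x t) y :=
  (dF hU hg hxy).comp y ((differentiableAt_const x).prodMk differentiableAt_id)

/-- for `C²` functions `f, r` on an open `U ⊆ ℝ²`, at every point of `U` where
`f` vanishes one has `H(f·r) = r³·H(f)`. -/
theorem stmt8 (U : Set (ℝ × ℝ)) (hU : IsOpen U) (f r : ℝ → ℝ → ℝ)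
    (hf : ContDiffOn ℝ 2 (fun q : ℝ × ℝ => f q.1 q.2) U)
    (hr : ContDiffOn ℝ 2 (fun q : ℝ × ℝ => r q.1 q.2) U) :
    ∀ x y : ℝ, (x, y) ∈ U → f x y = 0 →
      Hfun (fun x' y' => f x' y' * r x' y') x y = (r x y) ^ 3 * Hfun f x y := by
  intro x y hxy hf0
  set P : ℝ → ℝ → ℝ := fun a b => f a b * r a b with hP
  -- product rule for first partials, valid on U
  have prodx : ∀ a b : ℝ, (a, b) ∈ U →
      px P a b = px f a b * r a b + f a b * px r a b := by
    intro a b hab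
    exact deriv_mul (diff1 hU hf hab) (diff1 hU hr hab)
  have prody : ∀ a b : ℝ, (a, b) ∈ U →
      py P a b = py f a b * r a b + f a b * py r a b := by
    intro a b hab
    exact deriv_mul (diff2 hU hf hab) (diff2 hU hr hab)
  have hop1 : IsOpen {t : ℝ | (t, y) ∈ U} := hU.preimage (by fun_prop)
  have hop2 : IsOpen {t : ℝ | (x, t) ∈ U} := hU.preimage (by fun_prop)
  -- second partials of P at (x, y)
  have hPxx : px (px P) x y = px (px f) x y * r x y + px f x y * px r x y
      + (px f x y * px r x y + f x y * px (px r) x y) := by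
    have hev : (fun t => px P t y) =ᶠ[nhds x]
        (fun t => px f t y * r t y + f t y * px r t y) := by
      filter_upwards [hop1.mem_nhds hxy] with t ht
      exact prodx t y ht
    have : px (px P) x y = deriv (fun t => px f t y * r t y + f t y * px r t y) x :=
      hev.deriv_eq
    rw [this, deriv_fun_add ((diff_px1 hU hf hxy).fun_mul (diff1 hU hr hxy))
        ((diff1 hU hf hxy).fun_mul (diff_px1 hU hr hxy)),
      deriv_fun_mul (diff_px1 hU hf hxy) (diff1 hU hr hxy),
      deriv_fun_mul (diff1 hU hf hxy) (diff_px1 hU hr hxy)]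
    rfl
  have hPyx : py (px P) x y = py (px f) x y * r x y + px f x y * py r x y
      + (py f x y * px r x y + f x y * py (px r) x y) := by
    have hev : (fun t => px P x t) =ᶠ[nhds y]
        (fun t => px f x t * r x t + f x t * px r x t) := by
      filter_upwards [hop2.mem_nhds hxy] with t ht
      exact prodx x t ht
    have : py (px P) x y = deriv (fun t => px f x t * r x t + f x t * px r x t) y :=
      hev.deriv_eq
    rw [this, deriv_fun_add ((diff_px2 hU hf hxy).fun_mul (diff2 hU hr hxy))
        ((diff2 hU hf hxy).fun_mul (diff_px2 hU hr hxy)),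
      deriv_fun_mul (diff_px2 hU hf hxy) (diff2 hU hr hxy),
      deriv_fun_mul (diff2 hU hf hxy) (diff_px2 hU hr hxy)]
    rfl
  have hPyy : py (py P) x y = py (py f) x y * r x y + py f x y * py r x y
      + (py f x y * py r x y + f x y * py (py r) x y) := by
    have hev : (fun t => py P x t) =ᶠ[nhds y]
        (fun t => py f x t * r x t + f x t * py r x t) := by
      filter_upwards [hop2.mem_nhds hxy] with t ht
      exact prody x t ht
    have : py (py P) x y = deriv (fun t => py f x t * r x t + f x t * py r x t) y :=
      hev.deriv_eq
    rw [this, deriv_fun_add ((diff_py2 hU hf hxy).fun_mul (diff2 hU hr hxy))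
        ((diff2 hU hf hxy).fun_mul (diff_py2 hU hr hxy)),
      deriv_fun_mul (diff_py2 hU hf hxy) (diff2 hU hr hxy),
      deriv_fun_mul (diff2 hU hf hxy) (diff_py2 hU hr hxy)]
    rfl
  have hPx : px P x y = px f x y * r x y + f x y * px r x y := prodx x y hxy
  have hPy : py P x y = py f x y * r x y + f x y * py r x y := prody x y hxy
  show Hfun P x y = (r x y) ^ 3 * Hfun f x y
  simp only [Hfun, hPxx, hPyx, hPyy, hPx, hPy, hf0]
  ring
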